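/- Let C ⊂ ℙ³ be a twisted cubic (rational normal curve of degree 3). Then through a general point P ∈ ℙ³ there passes exactly one bisecant line of C (a line meeting C in two points, counted with multiplicity); i.e., the bisecant lines of the twisted cubic form a first order congruence of lines in ℙ³. -/

import Mathlib

open MvPolynomial

/-- The parameterization of the twisted cubic: `[s:t] ↦ [s³ : s²t : st² : t³]`. -/
noncomputable def tc (p : Fin 2 → ℂ) : Fin 4 → ℂ :=
  ![p 0 ^ 3, p 0 ^ 2 * p 1, p 0 * p 1 ^ 2, p 1 ^ 3]

/-- The differential of `tc` at `u` applied to `h` (used to describe tangent lines). -/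
noncomputable def tcD (u h : Fin 2 → ℂ) : Fin 4 → ℂ :=
  ![3 * u 0 ^ 2 * h 0,
    2 * u 0 * u 1 * h 0 + u 0 ^ 2 * h 1,
    u 1 ^ 2 * h 0 + 2 * u 0 * u 1 * h 1,
    3 * u 1 ^ 2 * h 1]

/-- A line `W` (2-dimensional subspace of `ℂ⁴`) is a bisecant of the twisted cubic:
it meets the curve in two points counted with multiplicity, i.e. it passes through two
distinct points of the curve, or it is a tangent line. -/
def IsBisecant (W : Submodule ℂ (Fin 4 → ℂ)) : Prop :=
  (∃ u w : Fin 2 → ℂ, LinearIndependent ℂ ![u, w] ∧ tc u ∈ W ∧ tc w ∈ W) ∨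
  (∃ u : Fin 2 → ℂ, u ≠ 0 ∧ ∀ h : Fin 2 → ℂ, tcD u h ∈ W)

lemma finrank_span_pair' {x y : Fin 4 → ℂ} (h : LinearIndependent ℂ ![x, y]) :
    Module.finrank ℂ (Submodule.span ℂ {x, y} : Submodule ℂ (Fin 4 → ℂ)) = 2 := by
  have hc := finrank_span_eq_card h
  have hr : Set.range ![x, y] = {x, y} := by
    ext z; simp [Matrix.range_cons, Matrix.range_empty, or_comm]
  rw [hr] at hc
  simpa using hc

/-- `tc ![1, a]` explicitly. -/
lemma tc_one (a : ℂ) : tc ![1, a] = ![1, a, a ^ 2, a ^ 3] := by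
  funext i; fin_cases i <;> simp [tc]

lemma tc_smul {u : Fin 2 → ℂ} (h : u 0 ≠ 0) :
    tc u = u 0 ^ 3 • tc ![1, u 1 / u 0] := by
  funext i; fin_cases i <;> simp [tc] <;> field_simp <;> ring

lemma li_tc {a b : ℂ} (hab : a ≠ b) :
    LinearIndependent ℂ ![tc ![1, a], tc ![1, b]] := by
  rw [LinearIndependent.pair_iff]
  intro s t hst
  have h0 := congrFun hst 0
  have h1 := congrFun hst 1
  simp [tc] at h0 h1
  have hs : s * (a - b) = 0 := by linear_combination h1 - b * h0
  have hs0 : s = 0 := by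
    rcases mul_eq_zero.mp hs with h | h
    · exact h
    · exact absurd (sub_eq_zero.mp h) hab
  exact ⟨hs0, by linear_combination h0 - hs0⟩

lemma li_param {a b : ℂ} (hab : a ≠ b) :
    LinearIndependent ℂ ![(![1, a] : Fin 2 → ℂ), ![1, b]] := by
  rw [LinearIndependent.pair_iff]
  intro s t hst
  have h0 := congrFun hst 0
  have h1 := congrFun hst 1
  simp at h0 h1
  have hs : s * (a - b) = 0 := by linear_combination h1 - b * h0
  have hs0 : s = 0 := by
    rcases mul_eq_zero.mp hs with h | h
    · exact h
    · exact absurd (sub_eq_zero.mp h) hab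
  exact ⟨hs0, by linear_combination h0 - hs0⟩

lemma quad_solve (c0 c1 c2 : ℂ) (hc2 : c2 ≠ 0) (hdisc : c1 ^ 2 - 4 * c0 * c2 ≠ 0) :
    ∃ a b : ℂ, a ≠ b ∧ c2 * a ^ 2 + c1 * a + c0 = 0 ∧ c2 * b ^ 2 + c1 * b + c0 = 0 ∧
      c2 * (a + b) = -c1 ∧ c2 * (a * b) = c0 := by
  obtain ⟨d, hd⟩ : ∃ d : ℂ, d ^ 2 = c1 ^ 2 - 4 * c0 * c2 :=
    IsAlgClosed.exists_pow_nat_eq _ two_pos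
  have hd0 : d ≠ 0 := fun h => hdisc (by rw [← hd, h]; ring)
  refine ⟨(-c1 + d) / (2 * c2), (-c1 - d) / (2 * c2), ?_, ?_, ?_, ?_, ?_⟩
  · set a := (-c1 + d) / (2 * c2)
    set b := (-c1 - d) / (2 * c2)
    have h2a : 2 * c2 * a = -c1 + d := by simp only [a]; field_simp
    have h2b : 2 * c2 * b = -c1 - d := by simp only [b]; field_simp
    intro h
    apply hd0
    have hdeq : d = c2 * (a - b) := by
      linear_combination (-(1/2) : ℂ) * h2a + (1/2 : ℂ) * h2b
    rw [hdeq, h]; ring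
  all_goals {
    set a := (-c1 + d) / (2 * c2) with ha
    set b := (-c1 - d) / (2 * c2) with hb
    have h2a : 2 * c2 * a = -c1 + d := by simp only [a]; field_simp
    have h2b : 2 * c2 * b = -c1 - d := by simp only [b]; field_simp
    have h4 : (4 : ℂ) * c2 ≠ 0 := by
      intro h; rcases mul_eq_zero.mp h with h | h
      · norm_num at h
      · exact hc2 h
    first
    | (apply mul_left_cancel₀ h4
       rw [mul_zero]
       linear_combination (2 * c2 * a + c1 + d) * h2a + hd)
    | (apply mul_left_cancel₀ h4
       rw [mul_zero]
       linear_combination (2 * c2 * b + c1 - d) * h2b + hd)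
    | (linear_combination (1/2 : ℂ) * h2a + (1/2 : ℂ) * h2b)
    | (apply mul_left_cancel₀ h4
       linear_combination (2 * c2 * b) * h2a + (-c1 + d) * h2b - hd) }

theorem stmt15 :
    ∃ G : MvPolynomial (Fin 4) ℂ, G ≠ 0 ∧
      ∀ v : Fin 4 → ℂ, v ≠ 0 → eval v G ≠ 0 →
        ∃! W : Submodule ℂ (Fin 4 → ℂ),
          Module.finrank ℂ W = 2 ∧ v ∈ W ∧ IsBisecant W := by
  refine ⟨(X 0 * X 2 - X 1 ^ 2) *
      ((X 1 * X 2 - X 0 * X 3) ^ 2 - 4 * (X 1 * X 3 - X 2 ^ 2) * (X 0 * X 2 - X 1 ^ 2)),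
      ?_, ?_⟩
  · intro h
    have h2 := congrArg (eval ![(1 : ℂ), 0, 1, 0]) h
    simp at h2
  · intro v hv hG
    simp only [map_mul, map_sub, map_pow, eval_X, map_ofNat] at hG
    set c2 : ℂ := v 0 * v 2 - v 1 ^ 2 with hc2def
    set c1 : ℂ := v 1 * v 2 - v 0 * v 3 with hc1def
    set c0 : ℂ := v 1 * v 3 - v 2 ^ 2 with hc0def
    have hc2 : c2 ≠ 0 := fun h => hG (by rw [h, zero_mul])
    have hdisc : c1 ^ 2 - 4 * c0 * c2 ≠ 0 := fun h => hG (by rw [h, mul_zero])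
    obtain ⟨a, b, hab, hqa, hqb, hsum, hprod⟩ := quad_solve c0 c1 c2 hc2 hdisc
    have hfact : ∀ r : ℂ, c2 * r ^ 2 + c1 * r + c0 = c2 * (r - a) * (r - b) := by
      intro r; linear_combination r * hsum - hprod
    have hroot : ∀ r : ℂ, c2 * r ^ 2 + c1 * r + c0 = 0 → r = a ∨ r = b := by
      intro r hr
      rw [hfact r] at hr
      rcases mul_eq_zero.mp hr with h | h
      · rcases mul_eq_zero.mp h with h2 | h2
        · exact absurd h2 hc2
        · exact Or.inl (sub_eq_zero.mp h2)
      · exact Or.inr (sub_eq_zero.mp h)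
    have hH1 : v 0 * c0 + v 1 * c1 + v 2 * c2 = 0 := by
      rw [hc0def, hc1def, hc2def]; ring
    have hH2 : v 1 * c0 + v 2 * c1 + v 3 * c2 = 0 := by
      rw [hc0def, hc1def, hc2def]; ring
    set x : Fin 4 → ℂ := tc ![1, a] with hxdef
    set y : Fin 4 → ℂ := tc ![1, b] with hydef
    set W : Submodule ℂ (Fin 4 → ℂ) := Submodule.span ℂ {x, y} with hWdef
    have hWrank : Module.finrank ℂ W = 2 := finrank_span_pair' (li_tc hab)
    set α : ℂ := (v 1 - b * v 0) / (a - b) with hαdef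
    set β : ℂ := (a * v 0 - v 1) / (a - b) with hβdef
    have habne : a - b ≠ 0 := sub_ne_zero.mpr hab
    have e0 : α + β = v 0 := by rw [hαdef, hβdef]; field_simp; ring
    have e1 : α * a + β * b = v 1 := by rw [hαdef, hβdef]; field_simp; ring
    have e2 : α * a ^ 2 + β * b ^ 2 = v 2 :=
      mul_left_cancel₀ hc2 (show c2 * (α * a ^ 2 + β * b ^ 2) = c2 * v 2 by
        linear_combination α * hqa + β * hqb - hH1 - c1 * e1 - c0 * e0)
    have e3 : α * a ^ 3 + β * b ^ 3 = v 3 :=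
      mul_left_cancel₀ hc2 (show c2 * (α * a ^ 3 + β * b ^ 3) = c2 * v 3 by
        linear_combination α * a * hqa + β * b * hqb - hH2 - c1 * e2 - c0 * e1)
    have hvW : v ∈ W := by
      rw [hWdef]
      refine Submodule.mem_span_pair.mpr ⟨α, β, ?_⟩
      funext i
      fin_cases i <;>
        simp [hxdef, hydef, tc_one] <;>
        [exact e0; exact e1; exact e2; exact e3]
    have hbis : IsBisecant W := by
      refine Or.inl ⟨![1, a], ![1, b], li_param hab, ?_, ?_⟩
      · exact Submodule.subset_span (by simp [hxdef])
      · exact Submodule.subset_span (by simp [hydef])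
    refine ⟨W, ⟨hWrank, hvW, hbis⟩, ?_⟩
    rintro W' ⟨hrank', hvW', hbis'⟩
    rcases hbis' with ⟨u, w, hind, huW, hwW⟩ | ⟨u, hu, hT⟩
    · -- secant case
      have hupair := LinearIndependent.pair_iff.mp hind
      have hune : u ≠ 0 := by
        intro h
        exact one_ne_zero (hupair 1 0 (by simp [h])).1
      have hwne : w ≠ 0 := by
        intro h
        exact one_ne_zero (hupair 0 1 (by simp [h])).2
      have hD : u 0 * w 1 - u 1 * w 0 ≠ 0 := by
        intro hDz
        have h1 := hupair (w 0) (-(u 0)) (by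
          funext i; fin_cases i <;> simp <;> ring_nf <;> linear_combination -hDz)
        have h2 := hupair (w 1) (-(u 1)) (by
          funext i; fin_cases i <;> simp <;> ring_nf <;> linear_combination hDz)
        apply hwne
        funext i; fin_cases i
        · exact h1.1
        · exact h2.1
      have hli : LinearIndependent ℂ ![tc u, tc w] := by
        rw [LinearIndependent.pair_iff]
        intro s t hst
        have h0 := congrFun hst 0
        have h1 := congrFun hst 1
        have h2 := congrFun hst 2
        have h3 := congrFun hst 3
        simp [tc] at h0 h1 h2 h3
        have hs0 : s = 0 := by
          by_contra hs
          have k0 : s * u 0 ^ 2 * (u 0 * w 1 - u 1 * w 0) = 0 := by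
            linear_combination w 1 * h0 - w 0 * h1
          have k2 : s * u 1 ^ 2 * (u 0 * w 1 - u 1 * w 0) = 0 := by
            linear_combination w 1 * h2 - w 0 * h3
          have hu0 : u 0 = 0 := by
            have := (mul_eq_zero.mp k0).resolve_right hD
            rcases mul_eq_zero.mp this with h | h
            · exact absurd h hs
            · exact (pow_eq_zero_iff two_ne_zero).mp h
          have hu1 : u 1 = 0 := by
            have := (mul_eq_zero.mp k2).resolve_right hD
            rcases mul_eq_zero.mp this with h | h
            · exact absurd h hs
            · exact (pow_eq_zero_iff two_ne_zero).mp h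
          exact hune (funext fun i => by fin_cases i <;> assumption)
        refine ⟨hs0, ?_⟩
        by_contra ht
        have hw0 : w 0 = 0 := by
          have : t * w 0 ^ 3 = 0 := by linear_combination h0 - u 0 ^ 3 * hs0
          exact (pow_eq_zero_iff three_ne_zero).mp ((mul_eq_zero.mp this).resolve_left ht)
        have hw1 : w 1 = 0 := by
          have : t * w 1 ^ 3 = 0 := by linear_combination h3 - u 1 ^ 3 * hs0
          exact (pow_eq_zero_iff three_ne_zero).mp ((mul_eq_zero.mp this).resolve_left ht)
        exact hwne (funext fun i => by fin_cases i <;> assumption)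
      have hspan : Submodule.span ℂ {tc u, tc w} = W' :=
        Submodule.eq_of_le_of_finrank_eq
          (Submodule.span_le.mpr
            (Set.insert_subset huW (Set.singleton_subset_iff.mpr hwW)))
          (by rw [finrank_span_pair' hli, hrank'])
      obtain ⟨A, B, hABv⟩ := Submodule.mem_span_pair.mp (hspan ▸ hvW')
      have g0 := congrFun hABv 0
      have g1 := congrFun hABv 1
      have g2 := congrFun hABv 2
      have g3 := congrFun hABv 3
      simp [tc] at g0 g1 g2 g3
      have hkey : c2 = A * B * u 0 * w 0 * (u 0 * w 1 - u 1 * w 0) ^ 2 := by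
        rw [hc2def, ← g0, ← g1, ← g2]; ring
      have hu0 : u 0 ≠ 0 := fun h0 => hc2 (by rw [hkey, h0]; ring)
      have hw0 : w 0 ≠ 0 := fun h0 => hc2 (by rw [hkey, h0]; ring)
      have hpolyu : c2 * u 1 ^ 2 + c1 * (u 0 * u 1) + c0 * u 0 ^ 2 = 0 := by
        rw [hc0def, hc1def, hc2def, ← g0, ← g1, ← g2, ← g3]; ring
      have hpolyw : c2 * w 1 ^ 2 + c1 * (w 0 * w 1) + c0 * w 0 ^ 2 = 0 := by
        rw [hc0def, hc1def, hc2def, ← g0, ← g1, ← g2, ← g3]; ring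
      have hra : c2 * (u 1 / u 0) ^ 2 + c1 * (u 1 / u 0) + c0 = 0 := by
        field_simp
        first
        | linear_combination hpolyu
        | linear_combination u 0 * hpolyu
      have hrb : c2 * (w 1 / w 0) ^ 2 + c1 * (w 1 / w 0) + c0 = 0 := by
        field_simp
        first
        | linear_combination hpolyw
        | linear_combination w 0 * hpolyw
      have hne : u 1 / u 0 ≠ w 1 / w 0 := by
        intro h
        apply hD
        rw [div_eq_div_iff hu0 hw0] at h
        linear_combination -h
      -- tc ![1, u1/u0] and tc ![1, w1/w0] belong to W'
      have hx' : tc ![1, u 1 / u 0] ∈ W' := by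
        have h := W'.smul_mem (u 0 ^ 3)⁻¹ huW
        rwa [tc_smul hu0, smul_smul, inv_mul_cancel₀ (pow_ne_zero 3 hu0), one_smul] at h
      have hy' : tc ![1, w 1 / w 0] ∈ W' := by
        have h := W'.smul_mem (w 0 ^ 3)⁻¹ hwW
        rwa [tc_smul hw0, smul_smul, inv_mul_cancel₀ (pow_ne_zero 3 hw0), one_smul] at h
      have hWle : W ≤ W' := by
        rw [hWdef]
        apply Submodule.span_le.mpr
        rcases hroot _ hra with h1 | h1 <;> rcases hroot _ hrb with h2 | h2
        · exact absurd (h1.trans h2.symm) hne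
        · refine Set.insert_subset ?_ (Set.singleton_subset_iff.mpr ?_)
          · rw [hxdef, ← h1]; exact hx'
          · rw [hydef, ← h2]; exact hy'
        · refine Set.insert_subset ?_ (Set.singleton_subset_iff.mpr ?_)
          · rw [hxdef, ← h2]; exact hy'
          · rw [hydef, ← h1]; exact hx'
        · exact absurd (h1.trans h2.symm) hne
      exact (Submodule.eq_of_le_of_finrank_eq hWle (by rw [hWrank, hrank'])).symm
    · -- tangent case: contradiction with the discriminant condition
      exfalso
      have hT0 := hT ![1, 0]
      have hT1 := hT ![0, 1]
      have hn : ¬(u 0 = 0 ∧ u 1 = 0) := by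
        rintro ⟨h0, h1⟩
        exact hu (funext fun i => by fin_cases i <;> assumption)
      have hli : LinearIndependent ℂ ![tcD u ![1, 0], tcD u ![0, 1]] := by
        rw [LinearIndependent.pair_iff]
        intro s t hst
        have h0 := congrFun hst 0
        have h1 := congrFun hst 1
        have h2 := congrFun hst 2
        have h3 := congrFun hst 3
        simp [tcD] at h0 h1 h2 h3
        rcases not_and_or.mp hn with h | h
        · have hs : s = 0 := h0.resolve_right h
          refine ⟨hs, ?_⟩
          have ht2 : t * u 0 ^ 2 = 0 := by linear_combination h1 - 2 * u 0 * u 1 * hs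
          rcases mul_eq_zero.mp ht2 with hh | hh
          · exact hh
          · exact absurd ((pow_eq_zero_iff two_ne_zero).mp hh) h
        · have ht : t = 0 := h3.resolve_right h
          have hs2 : s * u 1 ^ 2 = 0 := by linear_combination h2 - 2 * u 0 * u 1 * ht
          rcases mul_eq_zero.mp hs2 with hh | hh
          · exact ⟨hh, ht⟩
          · exact absurd ((pow_eq_zero_iff two_ne_zero).mp hh) h
      have hspan : Submodule.span ℂ {tcD u ![1, 0], tcD u ![0, 1]} = W' :=
        Submodule.eq_of_le_of_finrank_eq
          (Submodule.span_le.mpr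
            (Set.insert_subset hT0 (Set.singleton_subset_iff.mpr hT1)))
          (by rw [finrank_span_pair' hli, hrank'])
      obtain ⟨A, B, hABv⟩ := Submodule.mem_span_pair.mp (hspan ▸ hvW')
      have g0 := congrFun hABv 0
      have g1 := congrFun hABv 1
      have g2 := congrFun hABv 2
      have g3 := congrFun hABv 3
      simp [tcD] at g0 g1 g2 g3
      apply hdisc
      rw [hc0def, hc1def, hc2def, ← g0, ← g1, ← g2, ← g3]; ring
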